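/- For any even integer n ≥ 4 and prime power q, the chromatic index of PG(n,q) is at least (q^n-1)/(q-1) + q + 1. -/

import Mathlib

set_option maxHeartbeats 1000000
set_option linter.unusedSectionVars false

open Module Finset

attribute [local instance] Classical.propDecidable

section helpers

variable {F : Type} [Field F] [Fintype F]
variable {V : Type} [AddCommGroup V] [Module F V] [Fintype V] [FiniteDimensional F V]
variable [DecidableEq V]

lemma nz_card (U : Submodule F V) :
    (univ.filter fun v : V => v ∈ U ∧ v ≠ 0).card + 1 = Fintype.card F ^ finrank F ↥U := by
  have h0 : (univ.filter fun v : V => v ∈ U ∧ v ≠ 0)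
      = (univ.filter fun v : V => v ∈ U).erase 0 := by
    ext v; simp [Finset.mem_erase, and_comm]
  have h1 : (univ.filter fun v : V => v ∈ U).card = Fintype.card F ^ finrank F ↥U := by
    rw [← card_eq_pow_finrank (K := F) (V := ↥U), ← Fintype.card_coe]
    apply Fintype.card_congr
    exact (Equiv.subtypeEquivRight (by simp)).symm
  rw [h0, Finset.card_erase_add_one (by simp [Submodule.zero_mem]), h1]

lemma double_count {α β : Type*} (A : Finset α) (B : Finset β) (r : α → β → Prop) :
    ∑ a ∈ A, (B.filter fun b => r a b).card = ∑ b ∈ B, (A.filter fun a => r a b).card := by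
  simp only [Finset.card_filter]
  rw [Finset.sum_comm]

lemma spread_partition (S : Finset (Submodule F V)) (U : Submodule F V)
    (hd : ∀ W₁ ∈ S, ∀ W₂ ∈ S, W₁ ≠ W₂ → W₁ ⊓ W₂ = ⊥) :
    (univ.filter fun v : V => v ∈ U ∧ v ≠ 0).card
      = (∑ W ∈ S, (univ.filter fun v : V => v ∈ W ⊓ U ∧ v ≠ 0).card)
        + (univ.filter fun v : V => v ∈ U ∧ v ≠ 0 ∧ ∀ W ∈ S, v ∉ W).card := by
  have hsplit : (univ.filter fun v : V => v ∈ U ∧ v ≠ 0)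
      = (S.biUnion fun W => univ.filter fun v : V => v ∈ W ⊓ U ∧ v ≠ 0)
        ∪ (univ.filter fun v : V => v ∈ U ∧ v ≠ 0 ∧ ∀ W ∈ S, v ∉ W) := by
    ext v
    simp only [Finset.mem_union, Finset.mem_biUnion, Finset.mem_filter, Finset.mem_univ,
      true_and, Submodule.mem_inf]
    constructor
    · rintro ⟨hU, hv⟩
      by_cases h : ∃ W ∈ S, v ∈ W
      · obtain ⟨W, hWS, hvW⟩ := h; exact Or.inl ⟨W, hWS, ⟨hvW, hU⟩, hv⟩
      · push_neg at h; exact Or.inr ⟨hU, hv, h⟩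
    · rintro (⟨W, _, ⟨_, hU⟩, hv⟩ | ⟨hU, hv, _⟩) <;> exact ⟨hU, hv⟩
  rw [hsplit, Finset.card_union_of_disjoint, Finset.card_biUnion]
  · intro W₁ h₁ W₂ h₂ hne
    rw [Function.onFun, Finset.disjoint_left]
    rintro v hv₁ hv₂
    simp only [Finset.mem_filter, Submodule.mem_inf] at hv₁ hv₂
    have : v ∈ W₁ ⊓ W₂ := Submodule.mem_inf.2 ⟨hv₁.2.1.1, hv₂.2.1.1⟩
    rw [hd W₁ h₁ W₂ h₂ hne] at this
    exact hv₁.2.2 this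
  · rw [Finset.disjoint_right]
    intro v hv₁ hv₂
    simp only [Finset.mem_filter, Finset.mem_univ, true_and] at hv₁
    simp only [Finset.mem_biUnion, Finset.mem_filter, Finset.mem_univ, true_and,
      Submodule.mem_inf] at hv₂
    obtain ⟨W, hWS, ⟨hvW, _⟩, _⟩ := hv₂
    exact hv₁.2.2 W hWS hvW

lemma pow_modeq (q k : ℕ) (hq : 1 ≤ q) (hk : 1 ≤ k) : q ^ k ≡ q [MOD q * (q - 1)] := by
  obtain ⟨j, rfl⟩ : ∃ j, k = 1 + j := ⟨k - 1, by omega⟩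
  have h1 : q ^ j ≡ 1 [MOD q - 1] := by
    calc q ^ j ≡ 1 ^ j [MOD q - 1] :=
          Nat.ModEq.pow _ ((Nat.modEq_iff_dvd' hq).2 dvd_rfl).symm
      _ = 1 := one_pow j
  have h2 := Nat.ModEq.mul_left' (c := q) h1
  calc q ^ (1 + j) = q * q ^ j := by ring
    _ ≡ q * 1 [MOD q * (q - 1)] := h2
    _ = q := by ring

lemma ker_finrank (ψ : V →ₗ[F] F) (h : ψ ≠ 0) :
    finrank F ↥(LinearMap.ker ψ) + 1 = finrank F V := by
  have hrn := LinearMap.finrank_range_add_finrank_ker ψ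
  have hr : LinearMap.range ψ = ⊤ := by
    rcases eq_bot_or_eq_top (LinearMap.range ψ) with hb | ht
    · exact absurd (LinearMap.range_eq_bot.1 hb) h
    · exact ht
  rw [hr, finrank_top] at hrn
  rw [Module.finrank_self] at hrn
  omega

lemma inf_ker_finrank (W : Submodule F V) (h2 : finrank F ↥W = 2) (φ : Module.Dual F V) :
    finrank F ↥(W ⊓ LinearMap.ker φ) = 1 ∨ finrank F ↥(W ⊓ LinearMap.ker φ) = 2 := by
  set ψ := φ.comp W.subtype with hψ
  have hker : LinearMap.ker ψ = (LinearMap.ker φ).comap W.subtype := by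
    rw [hψ, LinearMap.ker_comp]
  have hmap : (LinearMap.ker ψ).map W.subtype = W ⊓ LinearMap.ker φ := by
    rw [hker, Submodule.map_comap_subtype]
  have hfr : finrank F ↥(W ⊓ LinearMap.ker φ) = finrank F ↥(LinearMap.ker ψ) := by
    rw [← hmap, Submodule.finrank_map_subtype_eq]
  have hrn := LinearMap.finrank_range_add_finrank_ker ψ
  rw [h2] at hrn
  have hle : finrank F ↥(LinearMap.range ψ) ≤ 1 := by
    have := Submodule.finrank_le (LinearMap.range ψ)
    rwa [Module.finrank_self] at this
  omega

lemma modeq_sum {α : Type*} {s : Finset α} {f g : α → ℕ} {n : ℕ}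
    (h : ∀ a ∈ s, f a ≡ g a [MOD n]) : (∑ a ∈ s, f a) ≡ (∑ a ∈ s, g a) [MOD n] := by
  classical
  induction s using Finset.induction_on with
  | empty => simp [Nat.ModEq.refl]
  | insert a s hx ih =>
    rw [Finset.sum_insert hx, Finset.sum_insert hx]
    exact (h a (Finset.mem_insert_self a s)).add
      (ih fun b hb => h b (Finset.mem_insert_of_mem hb))

lemma beutel {n : ℕ} (hn : 2 ≤ n) (heven : Even n) (hdim : finrank F V = n + 1)
    (S : Finset (Submodule F V)) (h2 : ∀ W ∈ S, finrank F ↥W = 2)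
    (hd : ∀ W₁ ∈ S, ∀ W₂ ∈ S, W₁ ≠ W₂ → W₁ ⊓ W₂ = ⊥) :
    Fintype.card F ^ 3 ≤
      (univ.filter fun v : V => v ∈ (⊤ : Submodule F V) ∧ v ≠ 0 ∧ ∀ W ∈ S, v ∉ W).card
        + Fintype.card F ^ 2 := by
  set q := Fintype.card F with hqdef
  have hq2 : 2 ≤ q := Fintype.one_lt_card
  have hq4 : 4 ≤ q ^ 2 := by nlinarith
  have hq8 : 8 ≤ q ^ 3 := by nlinarith
  have hqq2 : q + 1 ≤ q ^ 2 := by nlinarith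
  have hq23 : q ^ 2 + 1 ≤ q ^ 3 := by nlinarith
  set hv := (univ.filter fun v : V => v ∈ (⊤ : Submodule F V) ∧ v ≠ 0 ∧ ∀ W ∈ S, v ∉ W).card
    with hhv
  set M := S.card with hM
  -- Equation E1 : the whole space
  have hE1 : M * (q ^ 2 - 1) + hv + 1 = q ^ (n + 1) := by
    have hpart := spread_partition S ⊤ hd
    have htop : (univ.filter fun v : V => v ∈ (⊤ : Submodule F V) ∧ v ≠ 0).card + 1
        = q ^ (n + 1) := by
      rw [nz_card, finrank_top, hdim]
    have hW : ∀ W ∈ S, (univ.filter fun v : V => v ∈ W ⊓ (⊤ : Submodule F V) ∧ v ≠ 0).card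
        = q ^ 2 - 1 := by
      intro W hWS
      have h := nz_card (F := F) (W ⊓ (⊤ : Submodule F V))
      have hfr : finrank F ↥(W ⊓ (⊤ : Submodule F V)) = 2 := by
        rw [inf_top_eq]; exact h2 W hWS
      rw [hfr, ← hqdef] at h
      omega
    rw [Finset.sum_congr rfl hW, Finset.sum_const, smul_eq_mul, ← hM, ← hhv] at hpart
    omega
  -- hv mod (q^2 - 1)
  obtain ⟨k, hk⟩ := heven
  have hq21 : 1 ≤ q ^ 2 - 1 := by omega
  have hmodE : q ^ (n + 1) ≡ q [MOD q ^ 2 - 1] := by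
    have h1 : (q ^ 2) ^ k ≡ 1 ^ k [MOD q ^ 2 - 1] :=
      Nat.ModEq.pow _ ((Nat.modEq_iff_dvd' (by omega)).2 dvd_rfl).symm
    calc q ^ (n + 1) = q * (q ^ 2) ^ k := by rw [hk]; ring
      _ ≡ q * 1 ^ k [MOD q ^ 2 - 1] := Nat.ModEq.mul_left q h1
      _ = q := by ring
  have hvmod : hv ≡ q - 1 [MOD q ^ 2 - 1] := by
    have h0 : hv + 1 + M * (q ^ 2 - 1) ≡ hv + 1 + 0 [MOD q ^ 2 - 1] :=
      Nat.ModEq.add_left _ ((Nat.modEq_zero_iff_dvd).2 (dvd_mul_left _ _))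
    have h1 : hv + 1 ≡ q [MOD q ^ 2 - 1] := by
      calc hv + 1 = hv + 1 + 0 := by ring
        _ ≡ hv + 1 + M * (q ^ 2 - 1) [MOD q ^ 2 - 1] := h0.symm
        _ = M * (q ^ 2 - 1) + hv + 1 := by ring
        _ = q ^ (n + 1) := hE1
        _ ≡ q [MOD q ^ 2 - 1] := hmodE.symm.symm
    have h2' : hv + 1 ≡ (q - 1) + 1 [MOD q ^ 2 - 1] := by
      have : (q - 1) + 1 = q := by omega
      rwa [this]
    exact Nat.ModEq.add_right_cancel' 1 h2'
  set m := hv / (q ^ 2 - 1) with hmdef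
  have hvm : hv = (q ^ 2 - 1) * m + (q - 1) := by
    have hdm := Nat.div_add_mod hv (q ^ 2 - 1)
    rw [← hmdef] at hdm
    have h9 : hv % (q ^ 2 - 1) = q - 1 := by
      have h8 := hvmod
      unfold Nat.ModEq at h8
      rwa [Nat.mod_eq_of_lt (show q - 1 < q ^ 2 - 1 by omega)] at h8
    omega
  -- suppose for contradiction hv + q^2 < q^3
  by_contra hcon
  push_neg at hcon
  have hmle : m + 1 ≤ q - 1 := by
    by_contra h'
    push_neg at h'
    have h'' : q - 1 ≤ m := by omega
    have : (q ^ 2 - 1) * (q - 1) ≤ (q ^ 2 - 1) * m := Nat.mul_le_mul_left _ h''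
    have hexp : (q ^ 2 - 1) * (q - 1) + (q - 1) + q ^ 2 = q ^ 3 := by
      zify [show 1 ≤ q by omega, show 1 ≤ q ^ 2 by omega]
      ring
    omega
  -- per-hyperplane bound
  have hPbound : ∀ φ : Module.Dual F V, φ ≠ 0 →
      (m + 1) * (q - 1) ≤
        (univ.filter fun v : V => v ∈ LinearMap.ker φ ∧ v ≠ 0 ∧ ∀ W ∈ S, v ∉ W).card := by
    intro φ hφ
    set hP := (univ.filter fun v : V => v ∈ LinearMap.ker φ ∧ v ≠ 0 ∧ ∀ W ∈ S, v ∉ W).card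
      with hhP
    have hpart := spread_partition S (LinearMap.ker φ) hd
    have hker : (univ.filter fun v : V => v ∈ LinearMap.ker φ ∧ v ≠ 0).card + 1 = q ^ n := by
      rw [nz_card]
      have := ker_finrank φ hφ
      rw [hdim] at this
      have h3 : finrank F ↥(LinearMap.ker φ) = n := by omega
      rw [h3, ← hqdef]
    have hsum_mod : (∑ W ∈ S, (univ.filter fun v : V =>
        v ∈ W ⊓ LinearMap.ker φ ∧ v ≠ 0).card) ≡ M * (q - 1) [MOD q * (q - 1)] := by
      have : M * (q - 1) = ∑ _W ∈ S, (q - 1) := by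
        rw [Finset.sum_const, smul_eq_mul]
      rw [this]
      apply modeq_sum
      intro W hWS
      have h := nz_card (F := F) (W ⊓ LinearMap.ker φ)
      rw [← hqdef] at h
      have hd12 := inf_ker_finrank W (h2 W hWS) φ
      have hpow : q ^ (finrank F ↥(W ⊓ LinearMap.ker φ)) ≡ q [MOD q * (q - 1)] := by
        rcases hd12 with h1 | h1 <;> rw [h1] <;>
          exact pow_modeq q _ (by omega) (by omega)
      have : (univ.filter fun v : V => v ∈ W ⊓ LinearMap.ker φ ∧ v ≠ 0).card + 1
          ≡ (q - 1) + 1 [MOD q * (q - 1)] := by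
        rw [h, show (q - 1) + 1 = q by omega]
        exact hpow
      exact Nat.ModEq.add_right_cancel' 1 this
    -- hP + M*(q-1) + 1 ≡ q
    have e1 : hP + (M * (q - 1) + 1) ≡ q [MOD q * (q - 1)] := by
      calc hP + (M * (q - 1) + 1)
          ≡ hP + ((∑ W ∈ S, (univ.filter fun v : V =>
              v ∈ W ⊓ LinearMap.ker φ ∧ v ≠ 0).card) + 1) [MOD q * (q - 1)] :=
            Nat.ModEq.add_left _ (Nat.ModEq.add_right _ hsum_mod.symm)
        _ = (univ.filter fun v : V => v ∈ LinearMap.ker φ ∧ v ≠ 0).card + 1 := by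
            rw [hpart]; ring
        _ = q ^ n := hker
        _ ≡ q [MOD q * (q - 1)] := pow_modeq q n (by omega) (by omega)
    have e2 : hv + (M * (q - 1) + 1) ≡ q [MOD q * (q - 1)] := by
      have hq2mod : q ^ 2 - 1 ≡ q - 1 [MOD q * (q - 1)] := by
        have : (q ^ 2 - 1) + 1 ≡ (q - 1) + 1 [MOD q * (q - 1)] := by
          rw [show (q ^ 2 - 1) + 1 = q ^ 2 by omega, show (q - 1) + 1 = q by omega]
          exact pow_modeq q 2 (by omega) (by omega)
        exact Nat.ModEq.add_right_cancel' 1 this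
      calc hv + (M * (q - 1) + 1)
          ≡ hv + (M * (q ^ 2 - 1) + 1) [MOD q * (q - 1)] :=
            Nat.ModEq.add_left _ (Nat.ModEq.add_right _ (Nat.ModEq.mul_left M hq2mod.symm))
        _ = M * (q ^ 2 - 1) + hv + 1 := by ring
        _ = q ^ (n + 1) := hE1
        _ ≡ q [MOD q * (q - 1)] := pow_modeq q (n + 1) (by omega) (by omega)
    have e3 : hP ≡ hv [MOD q * (q - 1)] :=
      Nat.ModEq.add_right_cancel' _ (e1.trans e2.symm)
    have e4 : hv ≡ (m + 1) * (q - 1) [MOD q * (q - 1)] := by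
      have hq2mod : q ^ 2 - 1 ≡ q - 1 [MOD q * (q - 1)] := by
        have : (q ^ 2 - 1) + 1 ≡ (q - 1) + 1 [MOD q * (q - 1)] := by
          rw [show (q ^ 2 - 1) + 1 = q ^ 2 by omega, show (q - 1) + 1 = q by omega]
          exact pow_modeq q 2 (by omega) (by omega)
        exact Nat.ModEq.add_right_cancel' 1 this
      calc hv = (q ^ 2 - 1) * m + (q - 1) := hvm
        _ ≡ (q - 1) * m + (q - 1) [MOD q * (q - 1)] :=
            Nat.ModEq.add_right _ (Nat.ModEq.mul_right m hq2mod)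
        _ = (m + 1) * (q - 1) := by ring
    have e5 : hP ≡ (m + 1) * (q - 1) [MOD q * (q - 1)] := e3.trans e4
    have hlt : (m + 1) * (q - 1) < q * (q - 1) :=
      mul_lt_mul_of_pos_right (show m + 1 < q by omega) (show 0 < q - 1 by omega)
    have : hP % (q * (q - 1)) = (m + 1) * (q - 1) := by
      unfold Nat.ModEq at e5
      rwa [Nat.mod_eq_of_lt hlt] at e5
    calc (m + 1) * (q - 1) = hP % (q * (q - 1)) := this.symm
      _ ≤ hP := Nat.mod_le _ _
  -- incidence count over nonzero functionals
  haveI : Finite (Module.Dual F V) :=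
    Finite.of_injective (fun f => (f : V → F)) DFunLike.coe_injective
  haveI : Fintype (Module.Dual F V) := Fintype.ofFinite _
  set A := (univ.filter fun φ : Module.Dual F V => φ ≠ 0) with hA
  set B := (univ.filter fun v : V => v ∈ (⊤ : Submodule F V) ∧ v ≠ 0 ∧ ∀ W ∈ S, v ∉ W) with hB
  have hAcard : A.card + 1 = q ^ (n + 1) := by
    have h := nz_card (F := F) (⊤ : Submodule F (Module.Dual F V))
    have hfr : finrank F ↥(⊤ : Submodule F (Module.Dual F V)) = n + 1 := by
      rw [finrank_top, Subspace.dual_finrank_eq, hdim]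
    rw [hfr, ← hqdef] at h
    have : A = (univ.filter fun φ : Module.Dual F V =>
        φ ∈ (⊤ : Submodule F (Module.Dual F V)) ∧ φ ≠ 0) := by
      apply Finset.filter_congr
      intro φ _
      simp
    rw [this]
    exact h
  have hswap := double_count A B (fun φ v => φ v = 0)
  have hLHS : ∀ φ ∈ A, (m + 1) * (q - 1) ≤ (B.filter fun v => φ v = 0).card := by
    intro φ hφA
    have hφ : φ ≠ 0 := by
      rw [hA] at hφA
      exact (Finset.mem_filter.1 hφA).2
    have : (B.filter fun v => φ v = 0)
        = (univ.filter fun v : V => v ∈ LinearMap.ker φ ∧ v ≠ 0 ∧ ∀ W ∈ S, v ∉ W) := by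
      rw [hB, Finset.filter_filter]
      apply Finset.filter_congr
      intro v _
      simp only [Submodule.mem_top, true_and, LinearMap.mem_ker]
      tauto
    rw [this]
    exact hPbound φ hφ
  have hRHS : ∀ v ∈ B, (A.filter fun φ => φ v = 0).card + 1 = q ^ n := by
    intro v hvB
    have hv0 : v ≠ 0 := by
      rw [hB] at hvB
      exact (Finset.mem_filter.1 hvB).2.2.1
    set ψ := Module.Dual.eval F V v with hψ
    have hψne : ψ ≠ 0 := by
      obtain ⟨f, hf, -⟩ := Submodule.exists_dual_map_eq_bot_of_notMem
        (p := (⊥ : Submodule F V)) (x := v) (by simpa using hv0) inferInstance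
      intro hc
      apply hf
      have : ψ f = 0 := by rw [hc]; rfl
      rwa [hψ, Module.Dual.eval_apply] at this
    have hkfr : finrank F ↥(LinearMap.ker ψ) = n := by
      have := ker_finrank ψ hψne
      rw [Subspace.dual_finrank_eq, hdim] at this
      omega
    have := nz_card (F := F) (LinearMap.ker ψ)
    rw [hkfr, ← hqdef] at this
    have heq : (A.filter fun φ => φ v = 0)
        = (univ.filter fun φ : Module.Dual F V => φ ∈ LinearMap.ker ψ ∧ φ ≠ 0) := by
      rw [hA, Finset.filter_filter]
      apply Finset.filter_congr
      intro φ _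
      simp only [LinearMap.mem_ker, hψ, Module.Dual.eval_apply]
      tauto
    rw [heq]
    exact this
  -- assemble the global inequality
  have hineq : A.card * ((m + 1) * (q - 1)) ≤ hv * (q ^ n - 1) := by
    calc A.card * ((m + 1) * (q - 1)) = ∑ _φ ∈ A, (m + 1) * (q - 1) := by
          rw [Finset.sum_const, smul_eq_mul]
      _ ≤ ∑ φ ∈ A, (B.filter fun v => φ v = 0).card := Finset.sum_le_sum hLHS
      _ = ∑ v ∈ B, (A.filter fun φ => φ v = 0).card := hswap
      _ = ∑ _v ∈ B, (q ^ n - 1) := by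
          apply Finset.sum_congr rfl
          intro v hvB
          have := hRHS v hvB
          omega
      _ = hv * (q ^ n - 1) := by rw [Finset.sum_const, smul_eq_mul]
  -- final contradiction
  have hQ : 4 ≤ q ^ n := by
    calc 4 = 2 ^ 2 := by norm_num
      _ ≤ q ^ n := Nat.pow_le_pow_left hq2 2 |>.trans (Nat.pow_le_pow_right (by omega) hn)
  have hAval : A.card = q ^ (n + 1) - 1 := by omega
  rw [hAval, hvm] at hineq
  have h1q : (1:ℕ) ≤ q := by omega
  zify [show 1 ≤ q ^ (n + 1) from Nat.one_le_pow _ _ (by omega), show 1 ≤ q ^ n by omega,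
    show 1 ≤ q ^ 2 by omega, h1q] at hineq hmle
  have hqn1 : ((q:ℤ)) ^ (n + 1) = (q:ℤ) * (q:ℤ) ^ n := by ring
  rw [hqn1] at hineq
  have hQz : (4:ℤ) ≤ (q:ℤ) ^ n := by exact_mod_cast hQ
  have key : ((q:ℤ) * (q:ℤ) ^ n - 1) * (((m:ℤ) + 1) * ((q:ℤ) - 1))
      - (((q:ℤ) ^ 2 - 1) * (m:ℤ) + ((q:ℤ) - 1)) * ((q:ℤ) ^ n - 1)
      = ((q:ℤ) - 1) * ((q:ℤ) ^ n * ((q:ℤ) - 1 - (m:ℤ)) + (q:ℤ) * (m:ℤ)) := by ring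
  have hmz : (0:ℤ) ≤ (q:ℤ) * (m:ℤ) := by positivity
  have h1 : (1:ℤ) ≤ (q:ℤ) - 1 - (m:ℤ) := by linarith
  have pos : (0:ℤ) < ((q:ℤ) - 1) * ((q:ℤ) ^ n * ((q:ℤ) - 1 - (m:ℤ)) + (q:ℤ) * (m:ℤ)) := by
    have hb : (4:ℤ) ≤ (q:ℤ) ^ n * ((q:ℤ) - 1 - (m:ℤ)) := by nlinarith
    have hc : (1:ℤ) ≤ (q:ℤ) - 1 := by
      have : (2:ℤ) ≤ (q:ℤ) := by exact_mod_cast hq2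
      linarith
    nlinarith
  linarith

lemma mem_card (U : Submodule F V) :
    (univ.filter fun v : V => v ∈ U).card = Fintype.card F ^ finrank F ↥U := by
  rw [← card_eq_pow_finrank (K := F) (V := ↥U), ← Fintype.card_coe]
  apply Fintype.card_congr
  exact (Equiv.subtypeEquivRight (by simp)).symm

lemma span_pair_two {v u : V} (hv : v ≠ 0) (hu : u ∉ Submodule.span F {v}) :
    finrank F ↥(Submodule.span F ({v, u} : Set V)) = 2 := by
  have hle : finrank F ↥(Submodule.span F ({v, u} : Set V)) ≤ 2 := by
    have h := finrank_span_finset_le_card (R := F) ({v, u} : Finset V)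
    have hc : ({v, u} : Finset V).card ≤ 2 := by
      apply (Finset.card_insert_le _ _).trans
      simp
    have hcoe : (({v, u} : Finset V) : Set V) = ({v, u} : Set V) := by simp
    rw [Set.finrank, hcoe] at h
    omega
  have hlt : Submodule.span F ({v} : Set V) < Submodule.span F ({v, u} : Set V) := by
    constructor
    · exact Submodule.span_mono (by simp)
    · intro hcontra
      exact hu (hcontra (Submodule.subset_span (by simp)))
  have h1 : finrank F ↥(Submodule.span F ({v} : Set V)) = 1 := finrank_span_singleton hv
  have := Submodule.finrank_lt_finrank_of_lt hlt
  omega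

lemma line_unique {v u : V} (hv : v ≠ 0) (hu : u ∉ Submodule.span F {v}) (W : Submodule F V)
    (h2 : finrank F ↥W = 2) (hvW : v ∈ W) (huW : u ∈ W) :
    Submodule.span F ({v, u} : Set V) = W := by
  have hle : Submodule.span F ({v, u} : Set V) ≤ W := by
    rw [Submodule.span_le]
    intro x hx
    rcases hx with rfl | hx
    · exact hvW
    · rw [Set.mem_singleton_iff] at hx; subst hx; exact huW
  exact Submodule.eq_of_le_of_finrank_le hle (by rw [h2, span_pair_two hv hu])

lemma lines_through [Fintype {W : Submodule F V // finrank F ↥W = 2}] {v : V} (hv : v ≠ 0) :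
    (univ.filter fun W : {W : Submodule F V // finrank F ↥W = 2} => v ∈ W.1).card
      * (Fintype.card F ^ 2 - Fintype.card F) + Fintype.card F
      = Fintype.card F ^ finrank F V := by
  set q := Fintype.card F with hqdef
  have hq2 : 2 ≤ q := Fintype.one_lt_card
  have hqq : q + 1 ≤ q ^ 2 := by nlinarith
  have hsv : (univ.filter fun u : V => u ∈ Submodule.span F {v}).card = q := by
    rw [mem_card, finrank_span_singleton hv, pow_one, hqdef]
  -- the complement of span {v} in V
  have htotal : (univ.filter fun u : V => u ∉ Submodule.span F {v}).card + q
      = q ^ finrank F V := by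
    have h := Finset.card_filter_add_card_filter_not
      (s := (univ : Finset V)) (p := fun u : V => u ∈ Submodule.span F {v})
    rw [hsv, Finset.card_univ, card_eq_pow_finrank (K := F) (V := V), ← hqdef] at h
    omega
  -- partition into lines through v
  have hsplit : (univ.filter fun u : V => u ∉ Submodule.span F {v})
      = (univ.filter fun W : {W : Submodule F V // finrank F ↥W = 2} => v ∈ W.1).biUnion
          (fun W => univ.filter fun u : V => u ∈ W.1 ∧ u ∉ Submodule.span F {v}) := by
    ext u
    simp only [Finset.mem_biUnion, Finset.mem_filter, Finset.mem_univ, true_and]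
    constructor
    · intro hu
      refine ⟨⟨Submodule.span F ({v, u} : Set V), span_pair_two hv hu⟩,
        Submodule.subset_span (by simp), Submodule.subset_span (by simp), hu⟩
    · rintro ⟨W, -, -, hu⟩
      exact hu
  have hdisj : ∀ W₁ ∈ (univ.filter fun W : {W : Submodule F V // finrank F ↥W = 2} => v ∈ W.1),
      ∀ W₂ ∈ (univ.filter fun W : {W : Submodule F V // finrank F ↥W = 2} => v ∈ W.1),
      W₁ ≠ W₂ → Disjoint
        (univ.filter fun u : V => u ∈ W₁.1 ∧ u ∉ Submodule.span F {v})
        (univ.filter fun u : V => u ∈ W₂.1 ∧ u ∉ Submodule.span F {v}) := by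
    intro W₁ h₁ W₂ h₂ hne
    rw [Finset.disjoint_left]
    intro u hu₁ hu₂
    simp only [Finset.mem_filter, Finset.mem_univ, true_and] at hu₁ hu₂ h₁ h₂
    apply hne
    apply Subtype.ext
    rw [← line_unique hv hu₁.2 W₁.1 W₁.2 h₁ hu₁.1, ← line_unique hv hu₂.2 W₂.1 W₂.2 h₂ hu₂.1]
  have hpiece : ∀ W ∈ (univ.filter fun W : {W : Submodule F V // finrank F ↥W = 2} => v ∈ W.1),
      (univ.filter fun u : V => u ∈ W.1 ∧ u ∉ Submodule.span F {v}).card = q ^ 2 - q := by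
    intro W hW
    simp only [Finset.mem_filter, Finset.mem_univ, true_and] at hW
    have hWcard : (univ.filter fun u : V => u ∈ W.1).card = q ^ 2 := by
      rw [mem_card, W.2, hqdef]
    have hsub : Submodule.span F ({v} : Set V) ≤ W.1 := by
      rw [Submodule.span_le]; simpa using hW
    have hin : (univ.filter fun u : V => u ∈ W.1 ∧ u ∈ Submodule.span F {v}).card = q := by
      rw [← hsv]
      congr 1
      apply Finset.filter_congr
      intro u _
      constructor
      · rintro ⟨-, h⟩; exact h
      · intro h; exact ⟨hsub h, h⟩
    have h := Finset.card_filter_add_card_filter_not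
      (s := univ.filter fun u : V => u ∈ W.1) (p := fun u : V => u ∈ Submodule.span F {v})
    rw [Finset.filter_filter, Finset.filter_filter] at h
    have e1 : (univ.filter fun u : V => u ∈ W.1 ∧ u ∈ Submodule.span F {v})
        = (univ.filter fun a : V => a ∈ W.1 ∧ a ∈ Submodule.span F {v}) := rfl
    rw [← e1] at h
    rw [hin, hWcard] at h
    have e2 : (univ.filter fun a : V => a ∈ W.1 ∧ ¬a ∈ Submodule.span F {v})
        = (univ.filter fun u : V => u ∈ W.1 ∧ u ∉ Submodule.span F {v}) := rfl
    rw [e2] at h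
    omega
  rw [hsplit, Finset.card_biUnion hdisj, Finset.sum_congr rfl hpiece,
    Finset.sum_const, smul_eq_mul] at htotal
  exact htotal

lemma geom_nat (q n : ℕ) :
    (∑ i ∈ Finset.range n, q ^ i) * q + 1 = (∑ i ∈ Finset.range n, q ^ i) + q ^ n := by
  induction n with
  | zero => simp
  | succ n ih =>
    rw [Finset.sum_range_succ, pow_succ, add_mul]
    omega

end helpers

theorem stmt_6 (q n : ℕ) (hn : 4 ≤ n) (heven : Even n) (F : Type) [Field F] [Fintype F]
    (hq : Fintype.card F = q) :
    (q ^ n - 1) / (q - 1) + q + 1 ≤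
      sInf {c : ℕ | ∃ f : {W : Submodule F (Fin (n + 1) → F) // Module.finrank F W = 2} → Fin c,
        ∀ W₁ W₂, W₁ ≠ W₂ → W₁.1 ⊓ W₂.1 ≠ ⊥ → f W₁ ≠ f W₂} := by
  subst hq
  have hq2 : 2 ≤ Fintype.card F := Fintype.one_lt_card
  have hdimV : finrank F (Fin (n + 1) → F) = n + 1 := Module.finrank_fin_fun F
  haveI : Finite (Submodule F (Fin (n + 1) → F)) :=
    Finite.of_injective (fun U => (U : Set (Fin (n + 1) → F))) SetLike.coe_injective
  haveI : Fintype {W : Submodule F (Fin (n + 1) → F) // finrank F ↥W = 2} := Fintype.ofFinite _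
  have hq1n : 1 ≤ Fintype.card F ^ n := Nat.one_le_pow _ _ (by omega)
  have hq1n1 : 1 ≤ Fintype.card F ^ (n + 1) := Nat.one_le_pow _ _ (by omega)
  have hqle2 : Fintype.card F ≤ Fintype.card F ^ 2 := by nlinarith
  have hqlen1 : Fintype.card F ≤ Fintype.card F ^ (n + 1) :=
    Nat.le_self_pow (by omega) _
  have h3len1 : Fintype.card F ^ 3 ≤ Fintype.card F ^ (n + 1) :=
    Nat.pow_le_pow_right (by omega) (by omega)
  -- the geometric sum
  have htheta := geom_nat (Fintype.card F) n
  have hdiv : (Fintype.card F ^ n - 1) / (Fintype.card F - 1)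
      = ∑ i ∈ Finset.range n, Fintype.card F ^ i := by
    apply Nat.div_eq_of_eq_mul_left (by omega)
    zify [show 1 ≤ Fintype.card F by omega, hq1n]
    zify at htheta
    linear_combination -htheta
  rw [hdiv]
  apply le_csInf
  · exact ⟨Fintype.card {W : Submodule F (Fin (n + 1) → F) // finrank F ↥W = 2},
      fun W => Fintype.equivFin _ W,
      fun W₁ W₂ hne _ => by simpa using (Fintype.equivFin _).injective.ne hne⟩
  rintro c ⟨f, hf⟩
  by_contra hcon
  push_neg at hcon
  -- per-color covering bound
  have hcov : ∀ i : Fin c,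
      (∑ W ∈ (univ.filter fun W :
          {W : Submodule F (Fin (n + 1) → F) // finrank F ↥W = 2} => f W = i),
        (univ.filter fun v : Fin (n + 1) → F => v ∈ W.1 ∧ v ≠ 0).card)
        + Fintype.card F ^ 3 + 1
        ≤ Fintype.card F ^ (n + 1) + Fintype.card F ^ 2 := by
    intro i
    set Si := ((univ.filter fun W :
        {W : Submodule F (Fin (n + 1) → F) // finrank F ↥W = 2} => f W = i).image
        Subtype.val) with hSi
    have h2i : ∀ W ∈ Si, finrank F ↥W = 2 := by
      intro W hW
      rw [hSi] at hW
      obtain ⟨a, -, rfl⟩ := Finset.mem_image.1 hW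
      exact a.2
    have hdi : ∀ W₁ ∈ Si, ∀ W₂ ∈ Si, W₁ ≠ W₂ → W₁ ⊓ W₂ = ⊥ := by
      intro W₁ h₁ W₂ h₂ hne
      rw [hSi] at h₁ h₂
      obtain ⟨a, ha, rfl⟩ := Finset.mem_image.1 h₁
      obtain ⟨b, hb, rfl⟩ := Finset.mem_image.1 h₂
      simp only [Finset.mem_filter, Finset.mem_univ, true_and] at ha hb
      by_contra hne'
      exact hf a b (fun hab => hne (congrArg Subtype.val hab)) hne' (by rw [ha, hb])
    have hb := beutel (n := n) (by omega) heven hdimV Si h2i hdi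
    have hpart := spread_partition Si ⊤ hdi
    have htop := nz_card (F := F) (⊤ : Submodule F (Fin (n + 1) → F))
    rw [finrank_top, hdimV] at htop
    have hW : ∀ W ∈ Si, (univ.filter fun v : Fin (n + 1) → F =>
        v ∈ W ⊓ (⊤ : Submodule F (Fin (n + 1) → F)) ∧ v ≠ 0).card
        = Fintype.card F ^ 2 - 1 := by
      intro W hWS
      have h := nz_card (F := F) (W ⊓ (⊤ : Submodule F (Fin (n + 1) → F)))
      have hfr : finrank F ↥(W ⊓ (⊤ : Submodule F (Fin (n + 1) → F))) = 2 := by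
        rw [inf_top_eq]; exact h2i W hWS
      rw [hfr] at h
      omega
    rw [Finset.sum_congr rfl hW, Finset.sum_const, smul_eq_mul] at hpart
    have hnzW : ∀ W ∈ (univ.filter fun W :
        {W : Submodule F (Fin (n + 1) → F) // finrank F ↥W = 2} => f W = i),
        (univ.filter fun v : Fin (n + 1) → F => v ∈ W.1 ∧ v ≠ 0).card
          = Fintype.card F ^ 2 - 1 := by
      intro W _
      have h := nz_card (F := F) W.1
      rw [W.2] at h
      omega
    rw [Finset.sum_congr rfl hnzW, Finset.sum_const, smul_eq_mul]
    have hcardSi : Si.card = (univ.filter fun W :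
        {W : Submodule F (Fin (n + 1) → F) // finrank F ↥W = 2} => f W = i).card := by
      rw [hSi]
      exact Finset.card_image_of_injective _ Subtype.val_injective
    rw [hcardSi] at hpart
    omega
  -- D : max covered vectors per class
  obtain ⟨D, hD⟩ : ∃ D, D + (Fintype.card F ^ 3 + 1)
      = Fintype.card F ^ (n + 1) + Fintype.card F ^ 2 :=
    ⟨Fintype.card F ^ (n + 1) + Fintype.card F ^ 2 - (Fintype.card F ^ 3 + 1), by omega⟩
  -- global P
  have hfiber := Finset.sum_fiberwise (univ : Finset
      {W : Submodule F (Fin (n + 1) → F) // finrank F ↥W = 2}) f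
    (fun W => (univ.filter fun v : Fin (n + 1) → F => v ∈ W.1 ∧ v ≠ 0).card)
  have hPle : (∑ W : {W : Submodule F (Fin (n + 1) → F) // finrank F ↥W = 2},
      (univ.filter fun v : Fin (n + 1) → F => v ∈ W.1 ∧ v ≠ 0).card) ≤ c * D := by
    rw [← hfiber]
    calc (∑ i : Fin c, ∑ W ∈ (univ.filter fun W :
          {W : Submodule F (Fin (n + 1) → F) // finrank F ↥W = 2} => f W = i),
          (univ.filter fun v : Fin (n + 1) → F => v ∈ W.1 ∧ v ≠ 0).card)
        ≤ ∑ _i : Fin c, D := by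
          apply Finset.sum_le_sum
          intro i _
          have := hcov i
          omega
      _ = c * D := by rw [Finset.sum_const, smul_eq_mul, Finset.card_univ, Fintype.card_fin]
  -- double count pairs (line, nonzero vector)
  have hdc := double_count (univ : Finset
      {W : Submodule F (Fin (n + 1) → F) // finrank F ↥W = 2})
    (univ.filter fun v : Fin (n + 1) → F => v ≠ 0) (fun W v => v ∈ W.1)
  have hPeq : (∑ W : {W : Submodule F (Fin (n + 1) → F) // finrank F ↥W = 2},
      ((univ.filter fun v : Fin (n + 1) → F => v ≠ 0).filter fun v => v ∈ W.1).card)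
      = (∑ W : {W : Submodule F (Fin (n + 1) → F) // finrank F ↥W = 2},
      (univ.filter fun v : Fin (n + 1) → F => v ∈ W.1 ∧ v ≠ 0).card) := by
    apply Finset.sum_congr rfl
    intro W _
    rw [Finset.filter_filter]
    congr 1
    apply Finset.filter_congr
    intro v _
    tauto
  -- per-vector line count
  have hN2 : ∀ v ∈ (univ.filter fun v : Fin (n + 1) → F => v ≠ 0),
      ((univ : Finset {W : Submodule F (Fin (n + 1) → F) // finrank F ↥W = 2}).filter
        fun W => v ∈ W.1).card * (Fintype.card F ^ 2 - Fintype.card F) + Fintype.card F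
        = Fintype.card F ^ (n + 1) := by
    intro v hv
    have hv0 : v ≠ 0 := (Finset.mem_filter.1 hv).2
    have := lines_through (F := F) (V := Fin (n + 1) → F) hv0
    rwa [hdimV] at this
  -- cardinality of nonzero vectors
  have hnzV : (univ.filter fun v : Fin (n + 1) → F => v ≠ 0).card + 1
      = Fintype.card F ^ (n + 1) := by
    have h := nz_card (F := F) (⊤ : Submodule F (Fin (n + 1) → F))
    rw [finrank_top, hdimV] at h
    have heq : (univ.filter fun v : Fin (n + 1) → F =>
        v ∈ (⊤ : Submodule F (Fin (n + 1) → F)) ∧ v ≠ 0)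
        = (univ.filter fun v : Fin (n + 1) → F => v ≠ 0) := by
      apply Finset.filter_congr
      intro v _
      simp
    rwa [heq] at h
  -- assemble: P * (q^2-q) = (q^{n+1}-1)*(q^{n+1}-q)
  have hPmul : (∑ W : {W : Submodule F (Fin (n + 1) → F) // finrank F ↥W = 2},
      (univ.filter fun v : Fin (n + 1) → F => v ∈ W.1 ∧ v ≠ 0).card)
      * (Fintype.card F ^ 2 - Fintype.card F)
      = (Fintype.card F ^ (n + 1) - 1) * (Fintype.card F ^ (n + 1) - Fintype.card F) := by
    rw [← hPeq, hdc, Finset.sum_mul]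
    calc (∑ v ∈ (univ.filter fun v : Fin (n + 1) → F => v ≠ 0),
          ((univ : Finset {W : Submodule F (Fin (n + 1) → F) // finrank F ↥W = 2}).filter
            fun W => v ∈ W.1).card * (Fintype.card F ^ 2 - Fintype.card F))
        = ∑ _v ∈ (univ.filter fun v : Fin (n + 1) → F => v ≠ 0),
            (Fintype.card F ^ (n + 1) - Fintype.card F) := by
          apply Finset.sum_congr rfl
          intro v hv
          have := hN2 v hv
          omega
      _ = (Fintype.card F ^ (n + 1) - 1) * (Fintype.card F ^ (n + 1) - Fintype.card F) := by
          rw [Finset.sum_const, smul_eq_mul]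
          congr 1
          omega
  -- final inequality
  have hmain : (Fintype.card F ^ (n + 1) - 1) * (Fintype.card F ^ (n + 1) - Fintype.card F)
      ≤ ((∑ i ∈ Finset.range n, Fintype.card F ^ i) + Fintype.card F) * D
        * (Fintype.card F ^ 2 - Fintype.card F) := by
    rw [← hPmul]
    have hcle : c ≤ (∑ i ∈ Finset.range n, Fintype.card F ^ i) + Fintype.card F := by omega
    calc (∑ W : {W : Submodule F (Fin (n + 1) → F) // finrank F ↥W = 2},
          (univ.filter fun v : Fin (n + 1) → F => v ∈ W.1 ∧ v ≠ 0).card)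
          * (Fintype.card F ^ 2 - Fintype.card F)
        ≤ (c * D) * (Fintype.card F ^ 2 - Fintype.card F) :=
          Nat.mul_le_mul_right _ hPle
      _ ≤ (((∑ i ∈ Finset.range n, Fintype.card F ^ i) + Fintype.card F) * D)
          * (Fintype.card F ^ 2 - Fintype.card F) :=
          Nat.mul_le_mul_right _ (Nat.mul_le_mul_right _ hcle)
      _ = ((∑ i ∈ Finset.range n, Fintype.card F ^ i) + Fintype.card F) * D
          * (Fintype.card F ^ 2 - Fintype.card F) := by ring
  -- contradiction via integer arithmetic
  zify [hq1n1, hqlen1, hqle2, show 1 ≤ Fintype.card F by omega] at hmain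
  have hq2z : (2 : ℤ) ≤ (Fintype.card F : ℤ) := by exact_mod_cast hq2
  have hDz : (D : ℤ) = (Fintype.card F : ℤ) ^ (n + 1) + (Fintype.card F : ℤ) ^ 2
      - (Fintype.card F : ℤ) ^ 3 - 1 := by
    have h := hD
    zify at h
    linarith
  have hE : ((Fintype.card F : ℤ) - 1)
        * (((∑ i ∈ Finset.range n, Fintype.card F ^ i : ℕ) : ℤ) + (Fintype.card F : ℤ))
      = (Fintype.card F : ℤ) ^ n - 1 + ((Fintype.card F : ℤ) ^ 2 - (Fintype.card F : ℤ)) := by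
    have h := htheta
    zify at h
    push_cast at h ⊢
    linear_combination h
  have h9 : ((Fintype.card F : ℤ) - 1) * (((Fintype.card F : ℤ) ^ (n + 1) - 1)
        * ((Fintype.card F : ℤ) ^ (n + 1) - (Fintype.card F : ℤ)))
      ≤ ((Fintype.card F : ℤ) - 1)
        * ((((∑ i ∈ Finset.range n, Fintype.card F ^ i : ℕ) : ℤ) + (Fintype.card F : ℤ))
          * (D : ℤ) * ((Fintype.card F : ℤ) ^ 2 - (Fintype.card F : ℤ))) := by
    apply mul_le_mul_of_nonneg_left _ (by linarith)
    push_cast at hmain ⊢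
    linarith
  have h10 : ((Fintype.card F : ℤ) - 1)
        * ((((∑ i ∈ Finset.range n, Fintype.card F ^ i : ℕ) : ℤ) + (Fintype.card F : ℤ))
          * (D : ℤ) * ((Fintype.card F : ℤ) ^ 2 - (Fintype.card F : ℤ)))
      = ((Fintype.card F : ℤ) ^ n - 1 + ((Fintype.card F : ℤ) ^ 2 - (Fintype.card F : ℤ)))
          * (D : ℤ) * ((Fintype.card F : ℤ) ^ 2 - (Fintype.card F : ℤ)) := by
    linear_combination ((D : ℤ) * ((Fintype.card F : ℤ) ^ 2 - (Fintype.card F : ℤ))) * hE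
  rw [hDz] at h10 h9
  have key : ((Fintype.card F : ℤ) - 1) * (((Fintype.card F : ℤ) ^ (n + 1) - 1)
        * ((Fintype.card F : ℤ) ^ (n + 1) - (Fintype.card F : ℤ)))
      - ((Fintype.card F : ℤ) ^ n - 1 + ((Fintype.card F : ℤ) ^ 2 - (Fintype.card F : ℤ)))
        * ((Fintype.card F : ℤ) ^ (n + 1) + (Fintype.card F : ℤ) ^ 2
            - (Fintype.card F : ℤ) ^ 3 - 1)
        * ((Fintype.card F : ℤ) ^ 2 - (Fintype.card F : ℤ))
      = (Fintype.card F : ℤ) ^ 2 * ((Fintype.card F : ℤ) - 1) ^ 4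
          * ((Fintype.card F : ℤ) + 1) := by ring
  have hpos : (0 : ℤ) < (Fintype.card F : ℤ) ^ 2 * ((Fintype.card F : ℤ) - 1) ^ 4
      * ((Fintype.card F : ℤ) + 1) := by
    have h1 : (0 : ℤ) < (Fintype.card F : ℤ) ^ 2 := by positivity
    have h2 : (0 : ℤ) < ((Fintype.card F : ℤ) - 1) ^ 4 := pow_pos (by linarith) 4
    have h3 : (0 : ℤ) < (Fintype.card F : ℤ) + 1 := by linarith
    exact mul_pos (mul_pos h1 h2) h3
  nlinarith [h9, h10, key, hpos]
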